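/- Let n ≥ 2 be an integer, 0 < α < n, and 1 < p < q < ∞ with α/n = 1/p − 1/q. There exists a constant C = C(n, p, q, C₀) such that for every nonnegative f ∈ L^p(ℝ^{n+1}) with ‖f‖_{L^p} > 0, every integer ℓ with 0 ≤ ℓ ≤ η, and almost every (x,t) ∈ ℝ^{n+1}, (Δ_ℓ I_α f)(x,t) ≤ C θ_ℓ(x,t)^{1/p − 1/q} (M_η f)(x,t)^{p/q} ‖f‖_{L^p(ℝ^{n+1})}^{1 − p/q}. -/

import Mathlib

open MeasureTheory ENNReal NNReal

noncomputable section

/-- `ℝ^{n+1}` as `ℝ^n × ℝ`. -/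
abbrev Pt (n : ℕ) := EuclideanSpace ℝ (Fin n) × ℝ

/-- The open light cone `Λ = {(y,s) : |s| > |y|}`. -/
def lightCone (n : ℕ) : Set (Pt n) := {p | ‖p.1‖ < |p.2|}

/-- The integrand `f(x−y, t−s) (|s|+|y|)^{α−n} (|s|−|y|)^{α/n−1}`. -/
def ker (n : ℕ) (α : ℝ) (f : Pt n → ℝ) (z p : Pt n) : ℝ≥0∞ :=
  ENNReal.ofReal (f (z.1 - p.1, z.2 - p.2)) *
    ENNReal.ofReal ((|p.2| + ‖p.1‖) ^ (α - n) * (|p.2| - ‖p.1‖) ^ (α / n - 1))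

/-- The light-cone fractional integral `I_α f`. -/
def Iop (n : ℕ) (α : ℝ) (f : Pt n → ℝ) (z : Pt n) : ℝ≥0∞ :=
  ∫⁻ p in lightCone n, ker n α f z p

/-- The shifted cone shell `Λ_{ℓj}(x,t)`. -/
def shellAt (n : ℕ) (ℓ j : ℤ) (c : Pt n) : Set (Pt n) :=
  {p | (2:ℝ) ^ j ≤ |p.2 - c.2| + ‖p.1 - c.1‖ ∧ |p.2 - c.2| + ‖p.1 - c.1‖ < (2:ℝ) ^ (j + 1) ∧
       (2:ℝ) ^ (j - ℓ) ≤ |p.2 - c.2| - ‖p.1 - c.1‖ ∧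
       |p.2 - c.2| - ‖p.1 - c.1‖ < (2:ℝ) ^ (j - ℓ + 1)}

/-- The dyadic enlargement `Λ*_{ℓj}(x,t)`. -/
def shellStarAt (n : ℕ) (ℓ j : ℤ) (c : Pt n) : Set (Pt n) :=
  {p | (2:ℝ) ^ (j - 3) ≤ |p.2 - c.2| + ‖p.1 - c.1‖ ∧
       |p.2 - c.2| + ‖p.1 - c.1‖ < (2:ℝ) ^ (j + 3) ∧
       (2:ℝ) ^ (j - ℓ - 3) ≤ |p.2 - c.2| - ‖p.1 - c.1‖ ∧
       |p.2 - c.2| - ‖p.1 - c.1‖ < (2:ℝ) ^ (j - ℓ + 3)}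

/-- The cone shell `Λ_{ℓj}` (centered at the origin). -/
def shell (n : ℕ) (ℓ j : ℤ) : Set (Pt n) := shellAt n ℓ j 0

/-- The discrete dyadic cone `Λ_ℓ = ⋃_j Λ_{ℓj}`. -/
def Lam (n : ℕ) (ℓ : ℤ) : Set (Pt n) := ⋃ j : ℤ, shell n ℓ j

/-- The partial operator `Δ_{ℓj} I_α f`. -/
def Dlj (n : ℕ) (α : ℝ) (ℓ j : ℤ) (f : Pt n → ℝ) (z : Pt n) : ℝ≥0∞ :=
  ∫⁻ p in shell n ℓ j, ker n α f z p

/-- The partial operator `Δ_ℓ I_α f`. -/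
def Dl (n : ℕ) (α : ℝ) (ℓ : ℤ) (f : Pt n → ℝ) (z : Pt n) : ℝ≥0∞ :=
  ∫⁻ p in Lam n ℓ, ker n α f z p

/-- `θ_ℓ(x,t) = ‖f‖_p^{−p} ∬_{Λ_ℓ} f(x−y,t−s)^p dy ds`. -/
def theta (n : ℕ) (p : ℝ) (f : Pt n → ℝ) (ℓ : ℤ) (z : Pt n) : ℝ≥0∞ :=
  (∫⁻ w in Lam n ℓ, ENNReal.ofReal (f (z.1 - w.1, z.2 - w.2)) ^ p) /
    eLpNorm f (ENNReal.ofReal p) volume ^ p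

/-- The cone of directions `Γ^ν_η` with central direction `e`. -/
def coneDir (n η : ℕ) (e : EuclideanSpace ℝ (Fin n)) : Set (EuclideanSpace ℝ (Fin n)) :=
  {y | y ≠ 0 ∧ ‖(‖y‖⁻¹ • y) - e‖ ≤ 4 * (2:ℝ) ^ (-(η:ℝ))}

/-- The directional maximal operator `M^ν_η`. -/
def Mnu (n η : ℕ) (e : EuclideanSpace ℝ (Fin n)) (f : Pt n → ℝ) (z : Pt n) : ℝ≥0∞ :=
  ⨆ (ℓ : ℕ) (_ : ℓ ≤ η) (j : ℤ),
    (ENNReal.ofReal ((2:ℝ) ^ j * (2:ℝ) ^ (j - (ℓ:ℤ)) * (2:ℝ) ^ ((j - (η:ℤ)) * ((n:ℤ) - 1))))⁻¹ *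
      ∫⁻ p in {p : Pt n | p ∈ shell n ℓ j ∧ p.1 ∈ coneDir n η e},
        ENNReal.ofReal (f (z.1 - p.1, z.2 - p.2))

/-- The averaged maximal operator `M_η`. -/
def Meta (n η : ℕ) {ι : Type} [Fintype ι] (y : ι → EuclideanSpace ℝ (Fin n)) (f : Pt n → ℝ)
    (z : Pt n) : ℝ≥0∞ :=
  (ENNReal.ofReal ((2:ℝ) ^ ((η:ℤ) * ((n:ℤ) - 1))))⁻¹ * ∑ ν, Mnu n η (y ν) f z

/-- `Ω^α(x,t) = (|t|+|x|)^{α−n} (|t|−|x|)^{α/n−1}`. -/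
def Om (n : ℕ) (α : ℝ) (p : Pt n) : ℝ≥0∞ :=
  ENNReal.ofReal ((|p.2| + ‖p.1‖) ^ (α - n) * (|p.2| - ‖p.1‖) ^ (α / n - 1))


/-! ### Auxiliary lemmas -/

/-- `tp r = 2^r` in `ℝ≥0∞`. -/
def tp (r : ℝ) : ℝ≥0∞ := (2 : ℝ≥0∞) ^ r

lemma tp_ne_zero (r : ℝ) : tp r ≠ 0 := by
  simp [tp, ENNReal.rpow_eq_zero_iff]

lemma tp_ne_top (r : ℝ) : tp r ≠ ⊤ := by
  simp [tp, ENNReal.rpow_eq_top_iff]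

lemma tp_add (r s : ℝ) : tp (r + s) = tp r * tp s :=
  ENNReal.rpow_add r s (by norm_num) (by norm_num)

lemma tp_rpow (r s : ℝ) : tp r ^ s = tp (r * s) := (ENNReal.rpow_mul 2 r s).symm

lemma tp_neg (r : ℝ) : tp (-r) = (tp r)⁻¹ := ENNReal.rpow_neg 2 r

lemma tp_mono {r s : ℝ} (h : r ≤ s) : tp r ≤ tp s :=
  ENNReal.rpow_le_rpow_of_exponent_le (by norm_num) h

lemma tp_zpow (j : ℤ) : ENNReal.ofReal ((2:ℝ) ^ j) = tp (j : ℝ) := by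
  have h1 : ((2:ℝ) ^ j) = ((((2:ℝ≥0) ^ j) : ℝ≥0) : ℝ) := by
    push_cast; ring
  rw [h1, ENNReal.ofReal_coe_nnreal, ENNReal.coe_zpow (by norm_num), tp,
    ENNReal.rpow_intCast]
  norm_num

lemma tp_lt_one {r : ℝ} (h : r < 0) : tp r < 1 :=
  ENNReal.rpow_lt_one_of_one_lt_of_neg (by norm_num) h

lemma rpow_cancel {u : ℝ≥0∞} (hu0 : u ≠ 0) (hut : u ≠ ⊤) (σ : ℝ) :
    u / u ^ σ = u ^ (1 - σ) := by
  rw [ENNReal.rpow_sub 1 σ hu0 hut, ENNReal.rpow_one]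

/-- Sum of `2^{jc}` over `j ≤ j0`, for `c > 0`. -/
lemma sum_tp_left {c : ℝ} (hc : 0 < c) (j0 : ℤ) :
    ∑' j : ℤ, (if j ≤ j0 then tp ((j:ℝ) * c) else 0) ≤ tp ((j0:ℝ) * c) * (1 - tp (-c))⁻¹ := by
  have hinj : Function.Injective (fun k : ℕ => j0 - (k:ℤ)) := by
    intro a b h; simp only [sub_right_inj, Nat.cast_inj] at h; omega
  have hsupp : Function.support (fun j : ℤ => if j ≤ j0 then tp ((j:ℝ) * c) else 0) ⊆
      Set.range (fun k : ℕ => j0 - (k:ℤ)) := by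
    intro j hj
    by_cases h : j ≤ j0
    · exact ⟨(j0 - j).toNat, by simp only; omega⟩
    · simp [h] at hj
  rw [← Function.Injective.tsum_eq hinj hsupp]
  have heq : ∀ k : ℕ, (if (j0 - (k:ℤ)) ≤ j0 then tp (((j0 - (k:ℤ) : ℤ) : ℝ) * c) else 0)
      = tp ((j0:ℝ) * c) * (tp (-c)) ^ k := by
    intro k
    rw [if_pos (by omega), ← ENNReal.rpow_natCast (tp (-c)) k, tp_rpow, ← tp_add]
    congr 1
    push_cast
    ring
  calc (∑' k : ℕ, if (j0 - (k:ℤ)) ≤ j0 then tp (((j0 - (k:ℤ) : ℤ) : ℝ) * c) else 0)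
      = ∑' k : ℕ, tp ((j0:ℝ) * c) * (tp (-c)) ^ k := tsum_congr heq
    _ = tp ((j0:ℝ) * c) * (1 - tp (-c))⁻¹ := by
        rw [ENNReal.tsum_mul_left, ENNReal.tsum_geometric]
    _ ≤ tp ((j0:ℝ) * c) * (1 - tp (-c))⁻¹ := le_rfl

/-- Sum of `2^{jc}` over `j > j0`, for `c < 0`. -/
lemma sum_tp_right {c : ℝ} (hc : c < 0) (j0 : ℤ) :
    ∑' j : ℤ, (if j0 < j then tp ((j:ℝ) * c) else 0) ≤
      tp ((j0:ℝ) * c) * (1 - tp c)⁻¹ := by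
  have hinj : Function.Injective (fun k : ℕ => j0 + 1 + (k:ℤ)) := by
    intro a b h; simp only [add_right_inj, Nat.cast_inj] at h; omega
  have hsupp : Function.support (fun j : ℤ => if j0 < j then tp ((j:ℝ) * c) else 0) ⊆
      Set.range (fun k : ℕ => j0 + 1 + (k:ℤ)) := by
    intro j hj
    by_cases h : j0 < j
    · exact ⟨(j - j0 - 1).toNat, by simp only; omega⟩
    · simp [h] at hj
  rw [← Function.Injective.tsum_eq hinj hsupp]
  have heq : ∀ k : ℕ, (if j0 < j0 + 1 + (k:ℤ) then tp (((j0 + 1 + (k:ℤ) : ℤ) : ℝ) * c) else 0)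
      = (tp ((j0:ℝ) * c) * tp c) * (tp c) ^ k := by
    intro k
    rw [if_pos (by omega), ← ENNReal.rpow_natCast (tp c) k, tp_rpow, ← tp_add, ← tp_add]
    congr 1
    push_cast
    ring
  calc (∑' k : ℕ, if j0 < j0 + 1 + (k:ℤ) then tp (((j0 + 1 + (k:ℤ) : ℤ) : ℝ) * c) else 0)
      = ∑' k : ℕ, (tp ((j0:ℝ) * c) * tp c) * (tp c) ^ k := tsum_congr heq
    _ = tp ((j0:ℝ) * c) * tp c * (1 - tp c)⁻¹ := by
        rw [ENNReal.tsum_mul_left, ENNReal.tsum_geometric]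
    _ ≤ tp ((j0:ℝ) * c) * 1 * (1 - tp c)⁻¹ := by
        gcongr; exact le_of_lt (tp_lt_one hc)
    _ = tp ((j0:ℝ) * c) * (1 - tp c)⁻¹ := by rw [mul_one]

/-- Hedberg-type min-sum interpolation. -/
lemma minsum {δ1 δ2 θ : ℝ} (h1 : 0 < δ1) (h2 : δ2 < 0) (hθ : θ = -δ2 / (δ1 - δ2))
    (a b : ℝ≥0∞) :
    ∑' j : ℤ, min (a * tp ((j:ℝ) * δ1)) (b * tp ((j:ℝ) * δ2)) ≤
      (tp δ1 * (1 - tp (-δ1))⁻¹ + (1 - tp δ2)⁻¹) * (a ^ θ * b ^ (1 - θ)) := by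
  have hd : 0 < δ1 - δ2 := by linarith
  have hθ0 : 0 < θ := by rw [hθ]; exact div_pos (by linarith) hd
  have hθ1 : θ < 1 := by rw [hθ, div_lt_one hd]; linarith
  have hG2 : (1 - tp δ2)⁻¹ ≠ 0 := by
    rw [Ne, ENNReal.inv_eq_zero]
    exact (lt_of_le_of_lt tsub_le_self one_lt_top).ne
  have hC0 : (tp δ1 * (1 - tp (-δ1))⁻¹ + (1 - tp δ2)⁻¹) ≠ 0 := by
    simp only [Ne, add_eq_zero]
    tauto
  rcases eq_or_ne a 0 with rfl | ha0
  · have : ∀ j : ℤ, min ((0:ℝ≥0∞) * tp ((j:ℝ) * δ1)) (b * tp ((j:ℝ) * δ2)) = 0 := by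
      intro j; simp
    rw [tsum_congr this]; simp
  rcases eq_or_ne b 0 with rfl | hb0
  · have : ∀ j : ℤ, min (a * tp ((j:ℝ) * δ1)) ((0:ℝ≥0∞) * tp ((j:ℝ) * δ2)) = 0 := by
      intro j; simp
    rw [tsum_congr this]; simp
  rcases eq_or_ne a ⊤ with rfl | hatop
  · have : (⊤:ℝ≥0∞) ^ θ * b ^ (1 - θ) = ⊤ := by
      rw [ENNReal.top_rpow_of_pos hθ0, ENNReal.top_mul]
      rw [Ne, ENNReal.rpow_eq_zero_iff]
      rintro (⟨h, _⟩ | ⟨_, h⟩)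
      · exact hb0 h
      · linarith
    rw [this, ENNReal.mul_top hC0]
    exact le_top
  rcases eq_or_ne b ⊤ with rfl | hbtop
  · have : a ^ θ * (⊤:ℝ≥0∞) ^ (1 - θ) = ⊤ := by
      rw [ENNReal.top_rpow_of_pos (by linarith), ENNReal.mul_top]
      rw [Ne, ENNReal.rpow_eq_zero_iff]
      rintro (⟨h, _⟩ | ⟨_, h⟩)
      · exact ha0 h
      · linarith
    rw [this, ENNReal.mul_top hC0]
    exact le_top
  -- main case
  have hra : ∀ σ : ℝ, a ^ σ ≠ 0 ∧ a ^ σ ≠ ⊤ :=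
    fun σ => ⟨by simp [ENNReal.rpow_eq_zero_iff, ha0, hatop],
      by simp [ENNReal.rpow_eq_top_iff, ha0, hatop]⟩
  set t : ℝ := ((b / a).toReal) with ht
  have hba0 : b / a ≠ 0 := by
    simp [ENNReal.div_eq_zero_iff, hb0, hatop]
  have hbatop : b / a ≠ ⊤ := by
    simp [ENNReal.div_eq_top, hbtop, ha0]
  have htpos : 0 < t := ENNReal.toReal_pos hba0 hbatop
  set x : ℝ := Real.logb 2 t / (δ1 - δ2) with hx
  set j0 : ℤ := ⌈x⌉ with hj0
  have hxj0 : x ≤ (j0:ℝ) := Int.le_ceil x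
  have hj0x : (j0:ℝ) ≤ x + 1 := by
    have := Int.ceil_lt_add_one x
    linarith
  have hkey : tp (x * (δ1 - δ2)) = b / a := by
    have hxd : x * (δ1 - δ2) = Real.logb 2 t := by
      rw [hx, div_mul_cancel₀ _ hd.ne']
    rw [hxd]
    have h2' : tp (Real.logb 2 t) = ENNReal.ofReal ((2:ℝ) ^ (Real.logb 2 t)) := by
      rw [tp, ← ENNReal.ofReal_rpow_of_pos (by norm_num), ENNReal.ofReal_ofNat]
    rw [h2', Real.rpow_logb (by norm_num) (by norm_num) htpos, ht,
      ENNReal.ofReal_toReal hbatop]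
  have hmt : -δ2 = θ * (δ1 - δ2) := by rw [hθ]; field_simp
  have hd1 : δ1 = (1 - θ) * (δ1 - δ2) := by rw [hθ]; field_simp; ring
  have hleft : a * tp ((j0:ℝ) * δ1) ≤ tp δ1 * (a ^ θ * b ^ (1 - θ)) := by
    have h1' : tp ((j0:ℝ) * δ1) ≤ tp δ1 * (b / a) ^ (1 - θ) := by
      have hle : (j0:ℝ) * δ1 ≤ δ1 + x * δ1 := by nlinarith
      refine le_trans (tp_mono hle) ?_
      rw [tp_add]
      have hxe : tp (x * δ1) = (b / a) ^ (1 - θ) := by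
        rw [← hkey, tp_rpow]
        congr 1
        linear_combination x * hd1
      rw [hxe]
    calc a * tp ((j0:ℝ) * δ1) ≤ a * (tp δ1 * (b / a) ^ (1 - θ)) := by gcongr
      _ = tp δ1 * (a * (b ^ (1-θ) / a ^ (1-θ))) := by
          rw [ENNReal.div_rpow_of_nonneg _ _ (by linarith : (0:ℝ) ≤ 1 - θ)]; ring
      _ = tp δ1 * ((a / a ^ (1-θ)) * b ^ (1-θ)) := by
          rw [div_eq_mul_inv, div_eq_mul_inv]; ring
      _ = tp δ1 * (a ^ θ * b ^ (1 - θ)) := by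
          rw [rpow_cancel ha0 hatop]
          norm_num
  have hright : b * tp ((j0:ℝ) * δ2) ≤ a ^ θ * b ^ (1 - θ) := by
    have h2' : tp ((j0:ℝ) * δ2) ≤ a ^ θ / b ^ θ := by
      have hmono : (j0:ℝ) * δ2 ≤ x * δ2 := by nlinarith
      refine le_trans (tp_mono hmono) ?_
      have hxe : tp (x * δ2) = ((b / a) ^ θ)⁻¹ := by
        rw [← hkey, tp_rpow,
          show x * δ2 = -(x * (δ1 - δ2) * θ) from by linear_combination (-x) * hmt, tp_neg]
      rw [hxe, ENNReal.div_rpow_of_nonneg _ _ (le_of_lt hθ0),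
        ENNReal.inv_div (Or.inl (hra θ).2) (Or.inl (hra θ).1)]
    calc b * tp ((j0:ℝ) * δ2) ≤ b * (a ^ θ / b ^ θ) := by gcongr
      _ = a ^ θ * (b / b ^ θ) := by
          rw [div_eq_mul_inv, div_eq_mul_inv]; ring
      _ = a ^ θ * b ^ (1 - θ) := by rw [rpow_cancel hb0 hbtop]
  have hsplit : ∀ j : ℤ, min (a * tp ((j:ℝ) * δ1)) (b * tp ((j:ℝ) * δ2)) ≤
      (if j ≤ j0 then a * tp ((j:ℝ) * δ1) else 0)
        + (if j0 < j then b * tp ((j:ℝ) * δ2) else 0) := by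
    intro j
    by_cases h : j ≤ j0
    · rw [if_pos h, if_neg (by omega), add_zero]; exact min_le_left _ _
    · rw [if_neg h, if_pos (by omega), zero_add]; exact min_le_right _ _
  calc ∑' j : ℤ, min (a * tp ((j:ℝ) * δ1)) (b * tp ((j:ℝ) * δ2))
      ≤ ∑' j : ℤ, ((if j ≤ j0 then a * tp ((j:ℝ) * δ1) else 0)
          + (if j0 < j then b * tp ((j:ℝ) * δ2) else 0)) := ENNReal.tsum_le_tsum hsplit
    _ = (∑' j : ℤ, (if j ≤ j0 then a * tp ((j:ℝ) * δ1) else 0))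
        + ∑' j : ℤ, (if j0 < j then b * tp ((j:ℝ) * δ2) else 0) := ENNReal.tsum_add
    _ = a * (∑' j : ℤ, (if j ≤ j0 then tp ((j:ℝ) * δ1) else 0))
        + b * ∑' j : ℤ, (if j0 < j then tp ((j:ℝ) * δ2) else 0) := by
        rw [← ENNReal.tsum_mul_left, ← ENNReal.tsum_mul_left]
        congr 1 <;> exact tsum_congr (fun j => by split <;> simp)
    _ ≤ a * (tp ((j0:ℝ) * δ1) * (1 - tp (-δ1))⁻¹) + b * (tp ((j0:ℝ) * δ2) * (1 - tp δ2)⁻¹) := by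
        gcongr
        · exact sum_tp_left h1 j0
        · exact sum_tp_right h2 j0
    _ = (a * tp ((j0:ℝ) * δ1)) * (1 - tp (-δ1))⁻¹ + (b * tp ((j0:ℝ) * δ2)) * (1 - tp δ2)⁻¹ := by
        ring
    _ ≤ (tp δ1 * (a ^ θ * b ^ (1 - θ))) * (1 - tp (-δ1))⁻¹
        + (a ^ θ * b ^ (1 - θ)) * (1 - tp δ2)⁻¹ := by gcongr
    _ = (tp δ1 * (1 - tp (-δ1))⁻¹ + (1 - tp δ2)⁻¹) * (a ^ θ * b ^ (1 - θ)) := by ring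

/-! ### Shell geometry -/

lemma shell_eq (n : ℕ) (ℓ j : ℤ) : shell n ℓ j =
    {p : Pt n | (2:ℝ) ^ j ≤ |p.2| + ‖p.1‖ ∧ |p.2| + ‖p.1‖ < (2:ℝ) ^ (j + 1) ∧
      (2:ℝ) ^ (j - ℓ) ≤ |p.2| - ‖p.1‖ ∧ |p.2| - ‖p.1‖ < (2:ℝ) ^ (j - ℓ + 1)} := by
  simp [shell, shellAt, Prod.fst_zero, Prod.snd_zero]

lemma measurable_wfun (n : ℕ) : Measurable (fun p : Pt n => |p.2| + ‖p.1‖) :=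
  ((continuous_abs.comp continuous_snd).add (continuous_norm.comp continuous_fst)).measurable

lemma measurable_wfun' (n : ℕ) : Measurable (fun p : Pt n => |p.2| - ‖p.1‖) :=
  ((continuous_abs.comp continuous_snd).sub (continuous_norm.comp continuous_fst)).measurable

lemma shell_measurable (n : ℕ) (ℓ j : ℤ) : MeasurableSet (shell n ℓ j) := by
  rw [shell_eq]
  refine MeasurableSet.inter (measurableSet_le measurable_const (measurable_wfun n)) ?_
  refine MeasurableSet.inter (measurableSet_lt (measurable_wfun n) measurable_const) ?_
  exact MeasurableSet.inter (measurableSet_le measurable_const (measurable_wfun' n))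
    (measurableSet_lt (measurable_wfun' n) measurable_const)

lemma shell_disjoint (n : ℕ) (ℓ : ℤ) : Pairwise (Function.onFun Disjoint (shell n ℓ)) := by
  intro j j' hjj'
  rw [Function.onFun, Set.disjoint_left]
  intro p hp hp'
  rw [shell_eq] at hp hp'
  apply hjj'
  have h1 : (2:ℝ) ^ j < (2:ℝ) ^ (j' + 1) := lt_of_le_of_lt hp.1 hp'.2.1
  have h2 : (2:ℝ) ^ j' < (2:ℝ) ^ (j + 1) := lt_of_le_of_lt hp'.1 hp.2.1
  have h1' : j < j' + 1 := by
    exact_mod_cast (zpow_lt_zpow_iff_right₀ (by norm_num : (1:ℝ) < 2)).mp h1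
  have h2' : j' < j + 1 := by
    exact_mod_cast (zpow_lt_zpow_iff_right₀ (by norm_num : (1:ℝ) < 2)).mp h2
  omega

/-- Volume bound for the shell. -/
lemma shell_volume (n : ℕ) (hn : 1 ≤ n) (ℓ j : ℤ) :
    volume (shell n ℓ j) ≤
      tp ((j:ℝ) * n + (j:ℝ) - (ℓ:ℝ) + ((n:ℝ) + 2)) *
        volume (Metric.ball (0 : EuclideanSpace ℝ (Fin n)) 1) := by
  haveI : Nonempty (Fin n) := ⟨⟨0, hn⟩⟩
  haveI : Nontrivial (EuclideanSpace ℝ (Fin n)) :=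
    Module.nontrivial_of_finrank_pos (R := ℝ) (by rw [finrank_euclideanSpace_fin]; omega)
  have hsplit : (volume : Measure (Pt n))
      = (volume : Measure (EuclideanSpace ℝ (Fin n))).prod volume := rfl
  rw [hsplit, Measure.prod_apply (shell_measurable n ℓ j)]
  have hslice : ∀ y : EuclideanSpace ℝ (Fin n),
      volume (Prod.mk y ⁻¹' shell n ℓ j) ≤
      (Metric.ball (0 : EuclideanSpace ℝ (Fin n)) ((2:ℝ)^(j+1))).indicator
        (fun _ => ENNReal.ofReal ((2:ℝ)^(j - ℓ + 1) * 2)) y := by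
    intro y
    by_cases hy : ‖y‖ < (2:ℝ)^(j+1)
    · rw [Set.indicator_of_mem (by simpa [Metric.mem_ball, dist_zero_right] using hy)]
      have hsub : Prod.mk y ⁻¹' shell n ℓ j ⊆
          Set.Ioc (-((2:ℝ)^(j-ℓ+1) + ‖y‖)) (-((2:ℝ)^(j-ℓ) + ‖y‖)) ∪
          Set.Ico ((2:ℝ)^(j-ℓ) + ‖y‖) ((2:ℝ)^(j-ℓ+1) + ‖y‖) := by
        intro s hs
        rw [shell_eq] at hs
        simp only [Set.mem_preimage, Set.mem_setOf_eq] at hs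
        obtain ⟨-, -, h3, h4⟩ := hs
        rcases le_or_gt 0 s with h | h
        · right
          constructor
          · rw [abs_of_nonneg h] at h3; linarith
          · rw [abs_of_nonneg h] at h4; linarith
        · left
          constructor
          · rw [abs_of_neg h] at h4; linarith
          · rw [abs_of_neg h] at h3; linarith
      calc volume (Prod.mk y ⁻¹' shell n ℓ j)
          ≤ volume (Set.Ioc (-((2:ℝ)^(j-ℓ+1) + ‖y‖)) (-((2:ℝ)^(j-ℓ) + ‖y‖)) ∪
            Set.Ico ((2:ℝ)^(j-ℓ) + ‖y‖) ((2:ℝ)^(j-ℓ+1) + ‖y‖)) := measure_mono hsub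
        _ ≤ ENNReal.ofReal ((2:ℝ)^(j-ℓ+1)) + ENNReal.ofReal ((2:ℝ)^(j-ℓ+1)) := by
            refine le_trans (measure_union_le _ _) ?_
            rw [Real.volume_Ioc, Real.volume_Ico]
            have hx : (0:ℝ) < (2:ℝ)^(j-ℓ) := by positivity
            exact add_le_add (ENNReal.ofReal_le_ofReal (by linarith))
              (ENNReal.ofReal_le_ofReal (by linarith))
        _ ≤ ENNReal.ofReal ((2:ℝ)^(j - ℓ + 1) * 2) := by
            rw [← ENNReal.ofReal_add (by positivity) (by positivity)]
            exact ENNReal.ofReal_le_ofReal (le_of_eq (by ring))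
    · rw [Set.indicator_of_notMem (by simpa [Metric.mem_ball, dist_zero_right] using hy)]
      have hemp : Prod.mk y ⁻¹' shell n ℓ j = ∅ := by
        rw [Set.eq_empty_iff_forall_notMem]
        intro s hs
        rw [shell_eq] at hs
        simp only [Set.mem_preimage, Set.mem_setOf_eq] at hs
        have := abs_nonneg s
        push_neg at hy
        linarith [hs.2.1]
      rw [hemp, measure_empty]
  calc ∫⁻ y, volume (Prod.mk y ⁻¹' shell n ℓ j) ≤
      ∫⁻ y, (Metric.ball (0 : EuclideanSpace ℝ (Fin n)) ((2:ℝ)^(j+1))).indicator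
        (fun _ => ENNReal.ofReal ((2:ℝ)^(j - ℓ + 1) * 2)) y := lintegral_mono hslice
    _ = ENNReal.ofReal ((2:ℝ)^(j - ℓ + 1) * 2) *
        volume (Metric.ball (0 : EuclideanSpace ℝ (Fin n)) ((2:ℝ)^(j+1))) := by
        rw [lintegral_indicator_const Metric.isOpen_ball.measurableSet]
    _ = ENNReal.ofReal ((2:ℝ)^(j - ℓ + 1) * 2) *
        (ENNReal.ofReal (((2:ℝ)^(j+1)) ^ n) *
          volume (Metric.ball (0:EuclideanSpace ℝ (Fin n)) 1)) := by
        rw [Measure.addHaar_ball volume 0 (by positivity : (0:ℝ) ≤ (2:ℝ)^(j+1)),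
          finrank_euclideanSpace_fin]
    _ ≤ tp ((j:ℝ) * n + (j:ℝ) - (ℓ:ℝ) + ((n:ℝ) + 2)) *
        volume (Metric.ball (0 : EuclideanSpace ℝ (Fin n)) 1) := by
        rw [← mul_assoc]
        gcongr
        have h1 : ((2:ℝ)^(j+1)) ^ n = (2:ℝ) ^ ((j+1) * n) := by
          rw [← zpow_natCast ((2:ℝ)^(j+1)), ← zpow_mul]
        have h2 : ((2:ℝ)^(j - ℓ + 1) * 2) = (2:ℝ) ^ (j - ℓ + 2) := by
          simp only [zpow_add₀ (by norm_num : (2:ℝ) ≠ 0)]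
          ring
        rw [h2, tp_zpow, h1, tp_zpow, ← tp_add]
        refine le_of_eq ?_
        congr 1
        push_cast
        ring

/-! ### Decomposition and the three basic estimates -/

lemma Dl_eq_tsum (n : ℕ) (α : ℝ) (ℓ : ℤ) (f : Pt n → ℝ) (z : Pt n) :
    Dl n α ℓ f z = ∑' j : ℤ, Dlj n α ℓ j f z := by
  rw [Dl, Lam, lintegral_iUnion (fun j => shell_measurable n ℓ j) (shell_disjoint n ℓ)]
  rfl

lemma ker_bound (n : ℕ) (hn : 1 ≤ n) {α : ℝ} (hα0 : 0 < α) (hαn : α < n) (ℓ j : ℤ)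
    (f : Pt n → ℝ) (z : Pt n) {w : Pt n} (hw : w ∈ shell n ℓ j) :
    ker n α f z w ≤ tp ((j:ℝ) * (α - n) + ((j:ℝ) - (ℓ:ℝ)) * (α / n - 1)) *
      ENNReal.ofReal (f (z.1 - w.1, z.2 - w.2)) := by
  have hn0 : (0:ℝ) < n := by exact_mod_cast hn
  rw [shell_eq] at hw
  obtain ⟨h1, h2, h3, h4⟩ := hw
  have hz1 : (0:ℝ) < (2:ℝ) ^ j := by positivity
  have hz2 : (0:ℝ) < (2:ℝ) ^ (j - ℓ) := by positivity
  have hb1 : (|w.2| + ‖w.1‖) ^ (α - n) ≤ ((2:ℝ) ^ j) ^ (α - n) :=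
    Real.rpow_le_rpow_of_nonpos hz1 h1 (by linarith)
  have hb2 : (|w.2| - ‖w.1‖) ^ (α / n - 1) ≤ ((2:ℝ) ^ (j - ℓ)) ^ (α / n - 1) :=
    Real.rpow_le_rpow_of_nonpos hz2 h3 (by
      have : α / n < 1 := (div_lt_one hn0).mpr hαn
      linarith)
  have hprod : ENNReal.ofReal ((|w.2| + ‖w.1‖) ^ (α - n) * (|w.2| - ‖w.1‖) ^ (α / n - 1))
      ≤ tp ((j:ℝ) * (α - n) + ((j:ℝ) - (ℓ:ℝ)) * (α / n - 1)) := by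
    calc ENNReal.ofReal ((|w.2| + ‖w.1‖) ^ (α - n) * (|w.2| - ‖w.1‖) ^ (α / n - 1))
        ≤ ENNReal.ofReal (((2:ℝ) ^ j) ^ (α - n) * ((2:ℝ) ^ (j - ℓ)) ^ (α / n - 1)) := by
          refine ENNReal.ofReal_le_ofReal ?_
          exact mul_le_mul hb1 hb2
            (Real.rpow_nonneg (le_trans (le_of_lt hz2) h3) _)
            (Real.rpow_nonneg (le_of_lt hz1) _)
      _ = tp ((j:ℝ) * (α - n) + ((j:ℝ) - (ℓ:ℝ)) * (α / n - 1)) := by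
          rw [ENNReal.ofReal_mul (Real.rpow_nonneg (le_of_lt hz1) _),
            ← ENNReal.ofReal_rpow_of_pos hz1, ← ENNReal.ofReal_rpow_of_pos hz2,
            tp_zpow, tp_zpow, tp_rpow, tp_rpow, ← tp_add]
          congr 1
          push_cast
          ring
  calc ker n α f z w
      = ENNReal.ofReal (f (z.1 - w.1, z.2 - w.2)) *
        ENNReal.ofReal ((|w.2| + ‖w.1‖) ^ (α - n) * (|w.2| - ‖w.1‖) ^ (α / n - 1)) := rfl
    _ ≤ ENNReal.ofReal (f (z.1 - w.1, z.2 - w.2)) *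
        tp ((j:ℝ) * (α - n) + ((j:ℝ) - (ℓ:ℝ)) * (α / n - 1)) := by gcongr
    _ = tp ((j:ℝ) * (α - n) + ((j:ℝ) - (ℓ:ℝ)) * (α / n - 1)) *
        ENNReal.ofReal (f (z.1 - w.1, z.2 - w.2)) := mul_comm _ _

lemma Dlj_bound (n : ℕ) (hn : 1 ≤ n) {α : ℝ} (hα0 : 0 < α) (hαn : α < n) (ℓ j : ℤ)
    (f : Pt n → ℝ) (hfm : Measurable f) (z : Pt n) :
    Dlj n α ℓ j f z ≤ tp ((j:ℝ) * (α - n) + ((j:ℝ) - (ℓ:ℝ)) * (α / n - 1)) *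
      ∫⁻ w in shell n ℓ j, ENNReal.ofReal (f (z.1 - w.1, z.2 - w.2)) := by
  rw [Dlj]
  calc ∫⁻ w in shell n ℓ j, ker n α f z w
      ≤ ∫⁻ w in shell n ℓ j, tp ((j:ℝ) * (α - n) + ((j:ℝ) - (ℓ:ℝ)) * (α / n - 1)) *
        ENNReal.ofReal (f (z.1 - w.1, z.2 - w.2)) :=
        setLIntegral_mono' (shell_measurable n ℓ j)
          (fun w hw => ker_bound n hn hα0 hαn ℓ j f z hw)
    _ = tp ((j:ℝ) * (α - n) + ((j:ℝ) - (ℓ:ℝ)) * (α / n - 1)) *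
        ∫⁻ w in shell n ℓ j, ENNReal.ofReal (f (z.1 - w.1, z.2 - w.2)) :=
        lintegral_const_mul' _ _ (tp_ne_top _)

/-- The maximal-function bound. -/
lemma F_max_bound (n η : ℕ) (hn : 1 ≤ n) {ι : Type} [Fintype ι]
    (y : ι → EuclideanSpace ℝ (Fin n))
    (hcover : ∀ w : EuclideanSpace ℝ (Fin n), w ≠ 0 → ∃ ν, w ∈ coneDir n η (y ν))
    (f : Pt n → ℝ) (z : Pt n) (ℓ : ℕ) (hℓη : ℓ ≤ η) (j : ℤ) :
    ∫⁻ w in shell n (ℓ:ℤ) j, ENNReal.ofReal (f (z.1 - w.1, z.2 - w.2)) ≤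
      tp ((j:ℝ) + ((j:ℝ) - (ℓ:ℝ)) + (j:ℝ) * ((n:ℝ) - 1)) * Meta n η y f z := by
  haveI : NeZero n := ⟨by omega⟩
  haveI : Nonempty (Fin n) := ⟨⟨0, hn⟩⟩
  haveI : Nontrivial (EuclideanSpace ℝ (Fin n)) :=
    Module.nontrivial_of_finrank_pos (R := ℝ) (by rw [finrank_euclideanSpace_fin]; omega)
  set g : Pt n → ℝ≥0∞ := fun w => ENNReal.ofReal (f (z.1 - w.1, z.2 - w.2)) with hg
  set Z : Set (Pt n) := {w : Pt n | w.1 = 0} with hZ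
  have hZ0 : volume Z = 0 := by
    have : Z = ({0} : Set (EuclideanSpace ℝ (Fin n))) ×ˢ (Set.univ : Set ℝ) := by
      ext w
      simp only [hZ, Set.mem_setOf_eq, Set.mem_prod, Set.mem_singleton_iff, Set.mem_univ,
        and_true]
    rw [this,
      show (volume : Measure (Pt n))
        = (volume : Measure (EuclideanSpace ℝ (Fin n))).prod volume from rfl,
      Measure.prod_prod, measure_singleton, zero_mul]
  set S : ι → Set (Pt n) := fun ν => {p : Pt n | p ∈ shell n (ℓ:ℤ) j ∧ p.1 ∈ coneDir n η (y ν)}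
    with hS
  have hsub : shell n (ℓ:ℤ) j ⊆ (⋃ ν, S ν) ∪ Z := by
    intro w hw
    by_cases h0 : w.1 = 0
    · exact Or.inr h0
    · obtain ⟨ν, hν⟩ := hcover w.1 h0
      exact Or.inl (Set.mem_iUnion.mpr ⟨ν, ⟨hw, hν⟩⟩)
  set Nr : ℝ := (2:ℝ)^j * (2:ℝ)^(j - (ℓ:ℤ)) * (2:ℝ)^((j - (η:ℤ)) * ((n:ℤ) - 1)) with hNr
  have hNrpos : 0 < Nr := by positivity
  have hsingle : ∀ ν : ι, ∫⁻ w in S ν, g w ≤ ENNReal.ofReal Nr * Mnu n η (y ν) f z := by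
    intro ν
    have hsup : (ENNReal.ofReal Nr)⁻¹ * ∫⁻ w in S ν, g w ≤ Mnu n η (y ν) f z := by
      rw [Mnu]
      exact le_iSup_of_le ℓ (le_iSup_of_le hℓη (le_iSup_of_le j le_rfl))
    calc ∫⁻ w in S ν, g w
        = ENNReal.ofReal Nr * ((ENNReal.ofReal Nr)⁻¹ * ∫⁻ w in S ν, g w) := by
          rw [← mul_assoc, ENNReal.mul_inv_cancel (by simp [hNrpos]) ENNReal.ofReal_ne_top,
            one_mul]
      _ ≤ ENNReal.ofReal Nr * Mnu n η (y ν) f z := by gcongr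
  have hMeta : ∑ ν : ι, Mnu n η (y ν) f z =
      ENNReal.ofReal ((2:ℝ) ^ ((η:ℤ) * ((n:ℤ) - 1))) * Meta n η y f z := by
    rw [Meta, ← mul_assoc, ENNReal.mul_inv_cancel (by positivity) ENNReal.ofReal_ne_top,
      one_mul]
  calc ∫⁻ w in shell n (ℓ:ℤ) j, g w
      ≤ ∫⁻ w in (⋃ ν, S ν) ∪ Z, g w := lintegral_mono_set hsub
    _ ≤ (∫⁻ w in ⋃ ν, S ν, g w) + ∫⁻ w in Z, g w := by
        refine le_trans (lintegral_mono' (Measure.restrict_union_le _ _) le_rfl) ?_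
        rw [lintegral_add_measure]
    _ = ∫⁻ w in ⋃ ν, S ν, g w := by rw [setLIntegral_measure_zero _ _ hZ0, add_zero]
    _ ≤ ∑' ν : ι, ∫⁻ w in S ν, g w := lintegral_iUnion_le _ _
    _ = ∑ ν : ι, ∫⁻ w in S ν, g w := tsum_fintype _
    _ ≤ ∑ ν : ι, ENNReal.ofReal Nr * Mnu n η (y ν) f z := Finset.sum_le_sum
        (fun ν _ => hsingle ν)
    _ = ENNReal.ofReal Nr * ∑ ν : ι, Mnu n η (y ν) f z := by rw [Finset.mul_sum]
    _ = ENNReal.ofReal Nr * (ENNReal.ofReal ((2:ℝ) ^ ((η:ℤ) * ((n:ℤ) - 1))) *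
        Meta n η y f z) := by rw [hMeta]
    _ = tp ((j:ℝ) + ((j:ℝ) - (ℓ:ℝ)) + (j:ℝ) * ((n:ℝ) - 1)) * Meta n η y f z := by
        rw [← mul_assoc, hNr, ENNReal.ofReal_mul (by positivity),
          ENNReal.ofReal_mul (by positivity), tp_zpow, tp_zpow, tp_zpow, tp_zpow,
          ← tp_add, ← tp_add, ← tp_add]
        congr 2
        push_cast
        ring

/-- The Hölder bound. -/
lemma F_holder_bound (n : ℕ) {p : ℝ} (hp : 1 < p) (ℓ j : ℤ)
    (f : Pt n → ℝ) (hfm : Measurable f) (z : Pt n) :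
    ∫⁻ w in shell n ℓ j, ENNReal.ofReal (f (z.1 - w.1, z.2 - w.2)) ≤
      (∫⁻ w in Lam n ℓ, ENNReal.ofReal (f (z.1 - w.1, z.2 - w.2)) ^ p) ^ (1/p) *
        (volume (shell n ℓ j)) ^ (1/p.conjExponent) := by
  have hpq' : p.HolderConjugate p.conjExponent := Real.HolderConjugate.conjExponent hp
  set g : Pt n → ℝ≥0∞ := fun w => ENNReal.ofReal (f (z.1 - w.1, z.2 - w.2)) with hgdef
  have hgm : Measurable g := by
    apply Measurable.ennreal_ofReal
    exact hfm.comp ((measurable_fst.const_sub z.1).prodMk (measurable_snd.const_sub z.2))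
  have h2 := ENNReal.lintegral_mul_le_Lp_mul_Lq (volume.restrict (shell n ℓ j)) hpq'
    hgm.aemeasurable (aemeasurable_const (b := (1:ℝ≥0∞)))
  simp only [Pi.mul_apply, mul_one, ENNReal.one_rpow, lintegral_one,
    Measure.restrict_apply_univ] at h2
  calc ∫⁻ w in shell n ℓ j, g w
      ≤ (∫⁻ w in shell n ℓ j, g w ^ p) ^ (1/p) *
        (volume (shell n ℓ j)) ^ (1/p.conjExponent) := h2
    _ ≤ (∫⁻ w in Lam n ℓ, g w ^ p) ^ (1/p) * (volume (shell n ℓ j)) ^ (1/p.conjExponent) := by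
        gcongr
        exact Set.subset_iUnion (shell n ℓ) j


theorem stmt12 (n : ℕ) (hn : 2 ≤ n) (α : ℝ) (hα0 : 0 < α) (hαn : α < n)
    (p q : ℝ) (hp : 1 < p) (hpq : p < q) (hform : α / n = 1 / p - 1 / q)
    (C₀ : ℝ) (hC₀ : 1 ≤ C₀) :
    ∃ C : ℝ≥0, 0 < C ∧ ∀ (η : ℕ), 1 ≤ η →
      ∀ (ι : Type) [Fintype ι] (y : ι → EuclideanSpace ℝ (Fin n)),
      (∀ ν, ‖y ν‖ = 1) →
      (∀ w : EuclideanSpace ℝ (Fin n), w ≠ 0 → ∃ ν, w ∈ coneDir n η (y ν)) →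
      ((Fintype.card ι : ℝ) ≤ C₀ * (2:ℝ) ^ ((η:ℤ) * ((n:ℤ) - 1))) →
      ∀ f : Pt n → ℝ, Measurable f → (∀ z, 0 ≤ f z) →
        MemLp f (ENNReal.ofReal p) volume → eLpNorm f (ENNReal.ofReal p) volume ≠ 0 →
      ∀ (ℓ : ℕ), ℓ ≤ η →
      ∀ᵐ z : Pt n ∂volume,
        Dl n α (ℓ:ℤ) f z ≤
          C * theta n p f (ℓ:ℤ) z ^ (1 / p - 1 / q) * Meta n η y f z ^ (p / q) *
            eLpNorm f (ENNReal.ofReal p) volume ^ (1 - p / q) := by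
  have hn0 : (0:ℝ) < n := by exact_mod_cast (by omega : 0 < n)
  have hp0 : (0:ℝ) < p := by linarith
  have hq0 : (0:ℝ) < q := by linarith
  have hiq0 : (0:ℝ) < 1/q := by positivity
  have hαn2 : α / n < 1/p := by rw [hform]; linarith
  have hpq' : p.HolderConjugate p.conjExponent := Real.HolderConjugate.conjExponent hp
  set p' : ℝ := p.conjExponent with hp'def
  have hp'inv : 1/p' = 1 - 1/p := by
    have h := hpq'.inv_add_inv_eq_one
    simp only [one_div]
    linarith
  have hp'nonneg : (0:ℝ) ≤ 1/p' := by
    have : 1/p < 1 := by rw [div_lt_one hp0]; linarith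
    linarith
  have hq'inv : 1/q = 1/p - α/n := by linarith [hform]
  set δ1 : ℝ := α + α / n with hδ1def
  set δ2 : ℝ := α + α / n - ((n:ℝ)+1)/p with hδ2def
  set θ : ℝ := p / q with hθdef
  have hδ1 : 0 < δ1 := by rw [hδ1def]; positivity
  have hid : (n:ℝ) * (α/n) = α := by field_simp
  have hδ2 : δ2 < 0 := by
    rw [hδ2def]
    have h2 := mul_lt_mul_of_pos_left hαn2 hn0
    have hsp : ((n:ℝ)+1)/p = (n:ℝ)*(1/p) + 1/p := by ring
    rw [hid] at h2
    rw [hsp]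
    linarith
  have hθ0 : 0 < θ := by rw [hθdef]; positivity
  have hθ1 : θ < 1 := by rw [hθdef, div_lt_one hq0]; linarith
  have hα : α = (n:ℝ) * (1/p - 1/q) := by rw [← hform, hid]
  have hdd : δ1 - δ2 = ((n:ℝ)+1)/p := by rw [hδ1def, hδ2def]; ring
  have hdd0 : δ1 - δ2 ≠ 0 := by rw [hdd]; positivity
  have hnum : -δ2 = θ * (δ1 - δ2) := by
    rw [hdd, hδ2def, hθdef, hα]
    field_simp
    ring
  have hθeq : θ = -δ2 / (δ1 - δ2) := by
    rw [hnum, mul_div_assoc, div_self hdd0, mul_one]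
  haveI : NeZero n := ⟨by omega⟩
  set B : ℝ≥0∞ := volume (Metric.ball (0:EuclideanSpace ℝ (Fin n)) 1) with hB
  have hB0 : B ≠ 0 := (Metric.measure_ball_pos _ _ one_pos).ne'
  have hBtop : B ≠ ⊤ := measure_ball_lt_top.ne
  set Cv2 : ℝ≥0∞ := tp (((n:ℝ)+2) * (1/p')) * B ^ (1/p') with hCv2
  set Cgeo : ℝ≥0∞ := tp δ1 * (1 - tp (-δ1))⁻¹ + (1 - tp δ2)⁻¹ with hCgeo
  set Ctot : ℝ≥0∞ := Cgeo * Cv2 ^ (1-θ) with hCtot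
  have hCv20 : Cv2 ≠ 0 :=
    mul_ne_zero (tp_ne_zero _) (by simp [ENNReal.rpow_eq_zero_iff, hB0, hBtop])
  have hCv2top : Cv2 ≠ ⊤ :=
    ENNReal.mul_ne_top (tp_ne_top _) (by simp [ENNReal.rpow_eq_top_iff, hB0, hBtop])
  have hG2ne : (1 - tp δ2)⁻¹ ≠ 0 := by
    rw [Ne, ENNReal.inv_eq_zero]
    exact (lt_of_le_of_lt tsub_le_self one_lt_top).ne
  have hCgeo0 : Cgeo ≠ 0 := by
    rw [hCgeo]
    simp only [Ne, add_eq_zero]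
    tauto
  have hCgeotop : Cgeo ≠ ⊤ := by
    rw [hCgeo]
    refine ENNReal.add_ne_top.mpr ⟨ENNReal.mul_ne_top (tp_ne_top _) ?_, ?_⟩
    · rw [Ne, ENNReal.inv_eq_top, tsub_eq_zero_iff_le]
      intro hle
      exact absurd (lt_of_le_of_lt hle (tp_lt_one (by linarith))) (lt_irrefl _)
    · rw [Ne, ENNReal.inv_eq_top, tsub_eq_zero_iff_le]
      intro hle
      exact absurd (lt_of_le_of_lt hle (tp_lt_one hδ2)) (lt_irrefl _)
  have hCtot0 : Ctot ≠ 0 :=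
    mul_ne_zero hCgeo0 (by simp [ENNReal.rpow_eq_zero_iff, hCv20, hCv2top])
  have hCtottop : Ctot ≠ ⊤ :=
    ENNReal.mul_ne_top hCgeotop (by simp [ENNReal.rpow_eq_top_iff, hCv20, hCv2top])
  refine ⟨Ctot.toNNReal, ENNReal.toNNReal_pos hCtot0 hCtottop, ?_⟩
  intro η hη ι _ y hynorm hcover hcard f hfm hf0 hmem hN0 ℓ hℓη
  have hCcoe : ((Ctot.toNNReal : ℝ≥0) : ℝ≥0∞) = Ctot := ENNReal.coe_toNNReal hCtottop
  set N : ℝ≥0∞ := eLpNorm f (ENNReal.ofReal p) volume with hNdef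
  have hNtop : N ≠ ⊤ := hmem.2.ne
  refine Filter.Eventually.of_forall (fun z => ?_)
  set g : Pt n → ℝ≥0∞ := fun w => ENNReal.ofReal (f (z.1 - w.1, z.2 - w.2)) with hgdef
  set A : ℝ≥0∞ := ∫⁻ w in Lam n (ℓ:ℤ), g w ^ p with hA
  set M : ℝ≥0∞ := Meta n η y f z with hM
  set a : ℝ≥0∞ := tp (-(ℓ:ℝ) * (α/n)) * M with ha
  set b : ℝ≥0∞ := tp ((ℓ:ℝ) * (1/q)) * (Cv2 * A ^ (1/p)) with hb
  have hjmin : ∀ j : ℤ, Dlj n α (ℓ:ℤ) j f z ≤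
      min (a * tp ((j:ℝ)*δ1)) (b * tp ((j:ℝ)*δ2)) := by
    intro j
    have hK := Dlj_bound n (by omega) hα0 hαn (ℓ:ℤ) j f hfm z
    set ej : ℝ := (j:ℝ) * (α - n) + ((j:ℝ) - ((ℓ:ℤ):ℝ)) * (α / n - 1) with hej
    refine le_min ?_ ?_
    · calc Dlj n α (ℓ:ℤ) j f z
          ≤ tp ej * ∫⁻ w in shell n (ℓ:ℤ) j, ENNReal.ofReal (f (z.1 - w.1, z.2 - w.2)) := hK
        _ ≤ tp ej * (tp ((j:ℝ) + ((j:ℝ) - (ℓ:ℝ)) + (j:ℝ) * ((n:ℝ) - 1)) * M) := by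
            gcongr
            exact F_max_bound n η (by omega) y hcover f z ℓ hℓη j
        _ = tp (ej + ((j:ℝ) + ((j:ℝ) - (ℓ:ℝ)) + (j:ℝ) * ((n:ℝ) - 1))) * M := by
            rw [← mul_assoc, ← tp_add]
        _ = tp (-(ℓ:ℝ) * (α/n) + (j:ℝ)*δ1) * M := by
            congr 2
            rw [hej, hδ1def]
            push_cast
            field_simp
            ring
        _ = a * tp ((j:ℝ)*δ1) := by
            rw [tp_add, ha]
            ring
    · calc Dlj n α (ℓ:ℤ) j f z
          ≤ tp ej * ∫⁻ w in shell n (ℓ:ℤ) j, ENNReal.ofReal (f (z.1 - w.1, z.2 - w.2)) := hK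
        _ ≤ tp ej * (A ^ (1/p) * (volume (shell n (ℓ:ℤ) j)) ^ (1/p')) := by
            gcongr
            exact F_holder_bound n hp (ℓ:ℤ) j f hfm z
        _ ≤ tp ej * (A ^ (1/p) *
            (tp ((j:ℝ) * n + (j:ℝ) - ((ℓ:ℤ):ℝ) + ((n:ℝ) + 2)) * B) ^ (1/p')) := by
            gcongr
            exact shell_volume n (by omega) (ℓ:ℤ) j
        _ = b * tp ((j:ℝ)*δ2) := by
            rw [ENNReal.mul_rpow_of_nonneg _ _ hp'nonneg, tp_rpow]
            calc tp ej * (A ^ (1/p) *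
                (tp (((j:ℝ) * n + (j:ℝ) - ((ℓ:ℤ):ℝ) + ((n:ℝ) + 2)) * (1/p')) * B ^ (1/p')))
                = (tp ej * tp (((j:ℝ) * n + (j:ℝ) - ((ℓ:ℤ):ℝ) + ((n:ℝ) + 2)) * (1/p'))) *
                  (A ^ (1/p) * B ^ (1/p')) := by ring
              _ = tp (ej + ((j:ℝ) * n + (j:ℝ) - ((ℓ:ℤ):ℝ) + ((n:ℝ) + 2)) * (1/p')) *
                  (A ^ (1/p) * B ^ (1/p')) := by rw [← tp_add]
              _ = tp ((ℓ:ℝ) * (1/q) + ((n:ℝ)+2) * (1/p') + (j:ℝ)*δ2) *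
                  (A ^ (1/p) * B ^ (1/p')) := by
                  congr 2
                  rw [hej, hδ2def, hp'inv, hq'inv]
                  push_cast
                  field_simp
                  ring
              _ = b * tp ((j:ℝ)*δ2) := by
                  rw [tp_add, tp_add, hb, hCv2]
                  ring
  have hsum : Dl n α (ℓ:ℤ) f z ≤ Cgeo * (a ^ θ * b ^ (1 - θ)) := by
    rw [Dl_eq_tsum]
    refine le_trans (ENNReal.tsum_le_tsum hjmin) ?_
    rw [hCgeo]
    exact minsum hδ1 hδ2 hθeq a b
  have hzero : -(ℓ:ℝ) * (α/n) * θ + ((ℓ:ℝ) * (1/q)) * (1-θ) = 0 := by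
    rw [hform, hθdef]
    field_simp
    ring
  have hab : a ^ θ * b ^ (1 - θ) = M ^ θ * (Cv2 ^ (1-θ) * A ^ (1/p - 1/q)) := by
    rw [ha, hb]
    rw [ENNReal.mul_rpow_of_nonneg _ _ (le_of_lt hθ0),
      ENNReal.mul_rpow_of_nonneg _ _ (by linarith : (0:ℝ) ≤ 1 - θ),
      ENNReal.mul_rpow_of_nonneg _ _ (by linarith : (0:ℝ) ≤ 1 - θ),
      tp_rpow, tp_rpow, ← ENNReal.rpow_mul A]
    have hpe : (1/p) * (1-θ) = 1/p - 1/q := by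
      rw [hθdef]
      field_simp
    rw [hpe]
    calc tp (-(ℓ:ℝ) * (α/n) * θ) * M ^ θ *
        (tp ((ℓ:ℝ) * (1/q) * (1-θ)) * (Cv2 ^ (1-θ) * A ^ (1/p - 1/q)))
        = (tp (-(ℓ:ℝ) * (α/n) * θ) * tp ((ℓ:ℝ) * (1/q) * (1-θ))) *
          (M ^ θ * (Cv2 ^ (1-θ) * A ^ (1/p - 1/q))) := by ring
      _ = M ^ θ * (Cv2 ^ (1-θ) * A ^ (1/p - 1/q)) := by
          rw [← tp_add, hzero]
          simp [tp]
  have hfinal : Dl n α (ℓ:ℤ) f z ≤ Ctot * (M ^ θ * A ^ (1/p - 1/q)) := by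
    refine le_trans hsum ?_
    rw [hab, hCtot]
    exact le_of_eq (by ring)
  -- rewrite the target right-hand side
  have hth : theta n p f (ℓ:ℤ) z = A / N ^ p := rfl
  have hNc0 : N ^ (1 - p/q) ≠ 0 := by simp [ENNReal.rpow_eq_zero_iff, hN0, hNtop]
  have hNctop : N ^ (1 - p/q) ≠ ⊤ := by simp [ENNReal.rpow_eq_top_iff, hN0, hNtop]
  have hpe2 : p * (1/p - 1/q) = 1 - p/q := by field_simp
  have hRHS : (Ctot.toNNReal : ℝ≥0∞) * theta n p f (ℓ:ℤ) z ^ (1 / p - 1 / q) *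
      Meta n η y f z ^ (p / q) * N ^ (1 - p / q)
      = Ctot * (M ^ θ * A ^ (1/p - 1/q)) := by
    have he0 : (0:ℝ) ≤ 1/p - 1/q := by rw [← hform]; positivity
    rw [hCcoe, hth, ENNReal.div_rpow_of_nonneg _ _ he0, ← ENNReal.rpow_mul N, hpe2,
      ← hM, ← hθdef]
    calc Ctot * (A ^ (1/p - 1/q) / N ^ (1 - p/q)) * M ^ θ * N ^ (1 - p/q)
        = Ctot * M ^ θ * ((A ^ (1/p - 1/q) / N ^ (1 - p/q)) * N ^ (1 - p/q)) := by ring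
      _ = Ctot * M ^ θ * A ^ (1/p - 1/q) := by rw [ENNReal.div_mul_cancel hNc0 hNctop]
      _ = Ctot * (M ^ θ * A ^ (1/p - 1/q)) := by ring
  rw [hRHS]
  exact hfinal


end
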